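/- (Cross-covariance of the filter error with the observation noise.) Under the setting of the assembled error-covariance computation — (ε_l)_{l≥1} ℝ^m-valued and (η_l)_{l≥1} ℝ^n-valued square-integrable, zero-mean, Cov(ε_l) = I_m, Cov(η_l) = I_n, all mutually independent; x₀ ∈ ℝ^n deterministic; x_s = u_s + A x_{s−1} + β η_s; e₀ = 0 and e_s = Ã_s e_{s−1} − B̃_s ε_s − C̃_s η_s + F̃_s x_{s−1} + G̃_s with deterministic coefficient matrices and vectors — for all 0 ≤ h < t one has Cov(e_t, ε_{t−h}) = −(Ã_t Ã_{t−1} ⋯ Ã_{t−h+1}) B̃_{t−h}, where the matrix product is the identity when h = 0. -/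

import Mathlib

open Matrix MeasureTheory ProbabilityTheory

/-- The `a × b` covariance matrix `Cov(X, Y) = E[(X − E X)(Y − E Y)ᵀ]` of two
square-integrable random vectors. -/
noncomputable def covMatrix {Ω : Type*} [MeasureSpace Ω] {a b : ℕ}
    (X : Ω → Fin a → ℝ) (Y : Ω → Fin b → ℝ) : Matrix (Fin a) (Fin b) ℝ :=
  Matrix.of fun i j => ∫ ω, (X ω i - ∫ ω', X ω' i) * (Y ω j - ∫ ω', Y ω' j)

/-- Ordered matrix product `Π_l^t = Atil t * Atil (t-1) * ⋯ * Atil (l+1)`,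
equal to `1` when `l = t`. -/
noncomputable def ordProd {n : ℕ} (Atil : ℕ → Matrix (Fin n) (Fin n) ℝ) (l t : ℕ) :
    Matrix (Fin n) (Fin n) ℝ :=
  (((List.range (t - l)).map (fun j => Atil (t - j))).prod)

section Aux
open Filter
open scoped ENNReal NNReal

set_option linter.unusedVariables false


set_option linter.unusedSectionVars false
set_option maxHeartbeats 1000000

variable {Ω : Type*} [MeasureSpace Ω] [IsProbabilityMeasure (ℙ : Measure Ω)]

/-- scalar covariance -/
noncomputable def Cv (f g : Ω → ℝ) : ℝ := ∫ ω, (f ω - ∫ ω', f ω') * (g ω - ∫ ω', g ω')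

lemma integrable_mul_of_L2 {f g : Ω → ℝ} (hf : MemLp f 2 ℙ) (hg : MemLp g 2 ℙ) :
    Integrable (fun ω => f ω * g ω) ℙ := by
  have h := (hf.smul hg (r := 1)).integrable le_rfl
  simpa [smul_eq_mul, mul_comm, Pi.mul_def] using h

lemma Cv_eq {f g : Ω → ℝ} (hf : MemLp f 2 ℙ) (hg : MemLp g 2 ℙ) :
    Cv f g = (∫ ω, f ω * g ω) - (∫ ω, f ω) * (∫ ω, g ω) := by
  have hfi := hf.integrable one_le_two
  have hgi := hg.integrable one_le_two
  have hfg := integrable_mul_of_L2 hf hg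
  set a := ∫ ω, f ω with ha
  set b := ∫ ω, g ω with hb
  have hkey : ∀ ω, (f ω - a) * (g ω - b) = f ω * g ω - (a * g ω + b * f ω - a * b) := by
    intro ω; ring
  have h3 : Integrable (fun ω => a * g ω + b * f ω) ℙ := by
    exact (hgi.const_mul a).add (hfi.const_mul b)
  have h2 : Integrable (fun ω => a * g ω + b * f ω - a * b) ℙ := by
    exact h3.sub (integrable_const _)
  rw [Cv]
  simp_rw [← ha, ← hb, hkey]
  rw [integral_sub hfg h2, integral_sub h3 (integrable_const _),
    integral_add (hgi.const_mul a) (hfi.const_mul b), integral_const_mul, integral_const_mul,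
    integral_const]
  simp only [measure_univ, ENNReal.toReal_one, smul_eq_mul, one_mul, probReal_univ, mul_one]
  ring

lemma Cv_indep {f g : Ω → ℝ} (hf : MemLp f 2 ℙ) (hg : MemLp g 2 ℙ)
    (h : IndepFun f g ℙ) : Cv f g = 0 := by
  rw [Cv_eq hf hg]
  have := h.integral_mul_eq_mul_integral hf.aestronglyMeasurable hg.aestronglyMeasurable
  have h2 : (∫ ω, f ω * g ω) = (∫ ω, f ω) * ∫ ω, g ω := this
  rw [h2]; ring

lemma Cv_add {f f' g : Ω → ℝ} (hf : MemLp f 2 ℙ) (hf' : MemLp f' 2 ℙ) (hg : MemLp g 2 ℙ) :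
    Cv (fun ω => f ω + f' ω) g = Cv f g + Cv f' g := by
  rw [Cv_eq (by exact hf.add hf') hg, Cv_eq hf hg, Cv_eq hf' hg]
  have h1 : (∫ ω, (f ω + f' ω) * g ω) = (∫ ω, f ω * g ω) + ∫ ω, f' ω * g ω := by
    simp_rw [add_mul]
    exact integral_add (integrable_mul_of_L2 hf hg) (integrable_mul_of_L2 hf' hg)
  have h2 : (∫ ω, (f ω + f' ω)) = (∫ ω, f ω) + ∫ ω, f' ω :=
    integral_add (hf.integrable one_le_two) (hf'.integrable one_le_two)
  rw [h1, h2]; ring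

lemma Cv_sub {f f' g : Ω → ℝ} (hf : MemLp f 2 ℙ) (hf' : MemLp f' 2 ℙ) (hg : MemLp g 2 ℙ) :
    Cv (fun ω => f ω - f' ω) g = Cv f g - Cv f' g := by
  rw [Cv_eq (by exact hf.sub hf') hg, Cv_eq hf hg, Cv_eq hf' hg]
  have h1 : (∫ ω, (f ω - f' ω) * g ω) = (∫ ω, f ω * g ω) - ∫ ω, f' ω * g ω := by
    simp_rw [sub_mul]
    exact integral_sub (integrable_mul_of_L2 hf hg) (integrable_mul_of_L2 hf' hg)
  have h2 : (∫ ω, (f ω - f' ω)) = (∫ ω, f ω) - ∫ ω, f' ω :=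
    integral_sub (hf.integrable one_le_two) (hf'.integrable one_le_two)
  rw [h1, h2]; ring

lemma Cv_smul {f g : Ω → ℝ} (a : ℝ) (hf : MemLp f 2 ℙ) (hg : MemLp g 2 ℙ) :
    Cv (fun ω => a * f ω) g = a * Cv f g := by
  rw [Cv_eq (hf.const_mul a) hg, Cv_eq hf hg]
  have h1 : (∫ ω, a * f ω * g ω) = a * ∫ ω, f ω * g ω := by
    simp_rw [mul_assoc]; exact integral_const_mul a _
  rw [h1, integral_const_mul]; ring

lemma Cv_add_const {f g : Ω → ℝ} (c : ℝ) (hf : MemLp f 2 ℙ) (hg : MemLp g 2 ℙ) :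
    Cv (fun ω => f ω + c) g = Cv f g := by
  rw [Cv_eq (by exact hf.add (memLp_const c)) hg, Cv_eq hf hg]
  have h1 : (∫ ω, (f ω + c) * g ω) = (∫ ω, f ω * g ω) + c * ∫ ω, g ω := by
    simp_rw [add_mul]
    rw [integral_add (integrable_mul_of_L2 hf hg)
      ((hg.integrable one_le_two).const_mul c), integral_const_mul]
  have h2 : (∫ ω, (f ω + c)) = (∫ ω, f ω) + c := by
    rw [integral_add (hf.integrable one_le_two) (integrable_const c), integral_const]
    simp [measure_univ]
  rw [h1, h2]; ring

omit [IsProbabilityMeasure (ℙ : Measure Ω)] in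
lemma Cv_zero_left (g : Ω → ℝ) : Cv (fun _ => 0) g = 0 := by
  simp [Cv]

lemma Cv_sum {κ : Type*} (s : Finset κ) (a : κ → ℝ) (f : κ → Ω → ℝ) {g : Ω → ℝ}
    (hf : ∀ k, MemLp (f k) 2 ℙ) (hg : MemLp g 2 ℙ) :
    Cv (fun ω => ∑ k ∈ s, a k * f k ω) g = ∑ k ∈ s, a k * Cv (f k) g := by
  classical
  induction s using Finset.induction with
  | empty => simpa using Cv_zero_left g
  | insert k s' hk ih =>
    simp_rw [Finset.sum_insert hk]
    rw [Cv_add ((hf k).const_mul (a k))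
      (memLp_finset_sum s' (fun k' _ => (hf k').const_mul (a k'))) hg,
      Cv_smul (a k) (hf k) hg, ih]


omit [IsProbabilityMeasure (ℙ : Measure Ω)] in
lemma covMatrix_apply_Cv {a b : ℕ} (X : Ω → Fin a → ℝ) (Y : Ω → Fin b → ℝ) (i j) :
    covMatrix X Y i j = Cv (fun ω => X ω i) (fun ω => Y ω j) := rfl

lemma covMatrix_zero_of_indep {a b : ℕ} {X : Ω → Fin a → ℝ} {Z : Ω → Fin b → ℝ}
    (hX : ∀ i, MemLp (fun ω => X ω i) 2 ℙ) (hZ : ∀ j, MemLp (fun ω => Z ω j) 2 ℙ)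
    (h : IndepFun X Z ℙ) : covMatrix X Z = 0 := by
  ext i j
  rw [covMatrix_apply_Cv, Matrix.zero_apply]
  exact Cv_indep (hX i) (hZ j) (h.comp (measurable_pi_apply i) (measurable_pi_apply j))

lemma covMatrix_step {n p q : ℕ} (M C F : Matrix (Fin n) (Fin n) ℝ)
    (B : Matrix (Fin n) (Fin p) ℝ) (g : Fin n → ℝ)
    (X V W : Ω → Fin n → ℝ) (U : Ω → Fin p → ℝ) (Z : Ω → Fin q → ℝ)
    (hX : ∀ i, MemLp (fun ω => X ω i) 2 ℙ) (hU : ∀ i, MemLp (fun ω => U ω i) 2 ℙ)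
    (hV : ∀ i, MemLp (fun ω => V ω i) 2 ℙ) (hW : ∀ i, MemLp (fun ω => W ω i) 2 ℙ)
    (hZ : ∀ j, MemLp (fun ω => Z ω j) 2 ℙ) :
    covMatrix (fun ω => M *ᵥ X ω - B *ᵥ U ω - C *ᵥ V ω + F *ᵥ W ω + g) Z
      = M * covMatrix X Z - B * covMatrix U Z - C * covMatrix V Z + F * covMatrix W Z := by
  ext i j
  have hZj := hZ j
  have hMX : MemLp (fun ω => (M *ᵥ X ω) i) 2 ℙ := by
    simp only [Matrix.mulVec, dotProduct]
    exact memLp_finset_sum _ (fun k _ => (hX k).const_mul _)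
  have hBU : MemLp (fun ω => (B *ᵥ U ω) i) 2 ℙ := by
    simp only [Matrix.mulVec, dotProduct]
    exact memLp_finset_sum _ (fun k _ => (hU k).const_mul _)
  have hCV : MemLp (fun ω => (C *ᵥ V ω) i) 2 ℙ := by
    simp only [Matrix.mulVec, dotProduct]
    exact memLp_finset_sum _ (fun k _ => (hV k).const_mul _)
  have hFW : MemLp (fun ω => (F *ᵥ W ω) i) 2 ℙ := by
    simp only [Matrix.mulVec, dotProduct]
    exact memLp_finset_sum _ (fun k _ => (hW k).const_mul _)
  have hCvX : Cv (fun ω => (M *ᵥ X ω) i) (fun ω => Z ω j)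
      = ∑ k, M i k * Cv (fun ω => X ω k) (fun ω => Z ω j) := by
    simp only [Matrix.mulVec, dotProduct]
    exact Cv_sum Finset.univ (M i) _ (fun k => hX k) hZj
  have hCvU : Cv (fun ω => (B *ᵥ U ω) i) (fun ω => Z ω j)
      = ∑ k, B i k * Cv (fun ω => U ω k) (fun ω => Z ω j) := by
    simp only [Matrix.mulVec, dotProduct]
    exact Cv_sum Finset.univ (B i) _ (fun k => hU k) hZj
  have hCvV : Cv (fun ω => (C *ᵥ V ω) i) (fun ω => Z ω j)
      = ∑ k, C i k * Cv (fun ω => V ω k) (fun ω => Z ω j) := by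
    simp only [Matrix.mulVec, dotProduct]
    exact Cv_sum Finset.univ (C i) _ (fun k => hV k) hZj
  have hCvW : Cv (fun ω => (F *ᵥ W ω) i) (fun ω => Z ω j)
      = ∑ k, F i k * Cv (fun ω => W ω k) (fun ω => Z ω j) := by
    simp only [Matrix.mulVec, dotProduct]
    exact Cv_sum Finset.univ (F i) _ (fun k => hW k) hZj
  rw [covMatrix_apply_Cv]
  simp only [Pi.add_apply, Pi.sub_apply]
  rw [Cv_add_const (g i) (by exact ((hMX.sub hBU).sub hCV).add hFW) hZj,
    Cv_add (f := fun ω => (M *ᵥ X ω) i - (B *ᵥ U ω) i - (C *ᵥ V ω) i)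
      (f' := fun ω => (F *ᵥ W ω) i) (by exact (hMX.sub hBU).sub hCV) hFW hZj,
    Cv_sub (f := fun ω => (M *ᵥ X ω) i - (B *ᵥ U ω) i)
      (f' := fun ω => (C *ᵥ V ω) i) (by exact hMX.sub hBU) hCV hZj,
    Cv_sub (f := fun ω => (M *ᵥ X ω) i) (f' := fun ω => (B *ᵥ U ω) i) hMX hBU hZj,
    hCvX, hCvU, hCvV, hCvW]
  simp only [Matrix.add_apply, Matrix.sub_apply, Matrix.mul_apply, covMatrix_apply_Cv]

variable {Ω : Type*} [MeasureSpace Ω] [IsProbabilityMeasure (ℙ : Measure Ω)] {n m : ℕ}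

/-- The σ-algebra generated by all the noises except `ε T`. -/
def noiseSigma (εv : ℕ → Ω → Fin m → ℝ) (η : ℕ → Ω → Fin n → ℝ) (T : ℕ) :
    MeasurableSpace Ω :=
  ⨆ i ∈ ({Sum.inl (T - 1)}ᶜ : Set (ℕ ⊕ ℕ)),
    MeasurableSpace.comap
      (Sum.rec (motive := fun i => Ω → Sum.elim (fun _ => Fin m → ℝ) (fun _ => Fin n → ℝ) i)
        (fun l => εv (l + 1)) (fun l => η (l + 1)) i)
      (Sum.rec (motive := fun i => MeasurableSpace (Sum.elim (fun _ => Fin m → ℝ) (fun _ => Fin n → ℝ) i))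
        (fun _ => (inferInstance : MeasurableSpace (Fin m → ℝ)))
        (fun _ => (inferInstance : MeasurableSpace (Fin n → ℝ))) i)

omit [IsProbabilityMeasure (ℙ : Measure Ω)] in
lemma noiseSigma_meas_eps (εv : ℕ → Ω → Fin m → ℝ) (η : ℕ → Ω → Fin n → ℝ) (T l : ℕ)
    (hT : 1 ≤ T) (h : l + 1 ≠ T) : Measurable[noiseSigma εv η T] (εv (l + 1)) := by
  have hmem : (Sum.inl l : ℕ ⊕ ℕ) ∈ ({Sum.inl (T - 1)}ᶜ : Set (ℕ ⊕ ℕ)) := by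
    simp only [Set.mem_compl_iff, Set.mem_singleton_iff, Sum.inl.injEq]
    omega
  have hle : MeasurableSpace.comap (εv (l + 1)) inferInstance ≤ noiseSigma εv η T :=
    le_iSup₂ (f := fun (i : ℕ ⊕ ℕ) (_ : i ∈ ({Sum.inl (T - 1)}ᶜ : Set (ℕ ⊕ ℕ))) =>
      MeasurableSpace.comap
        (Sum.rec (motive := fun i => Ω → Sum.elim (fun _ => Fin m → ℝ) (fun _ => Fin n → ℝ) i)
          (fun l => εv (l + 1)) (fun l => η (l + 1)) i)
        (Sum.rec (motive := fun i => MeasurableSpace (Sum.elim (fun _ => Fin m → ℝ) (fun _ => Fin n → ℝ) i))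
          (fun _ => (inferInstance : MeasurableSpace (Fin m → ℝ)))
          (fun _ => (inferInstance : MeasurableSpace (Fin n → ℝ))) i))
      (Sum.inl l) hmem
  exact Measurable.of_comap_le hle

omit [IsProbabilityMeasure (ℙ : Measure Ω)] in
lemma noiseSigma_meas_eta (εv : ℕ → Ω → Fin m → ℝ) (η : ℕ → Ω → Fin n → ℝ) (T l : ℕ) :
    Measurable[noiseSigma εv η T] (η (l + 1)) := by
  have hmem : (Sum.inr l : ℕ ⊕ ℕ) ∈ ({Sum.inl (T - 1)}ᶜ : Set (ℕ ⊕ ℕ)) := by simp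
  have hle : MeasurableSpace.comap (η (l + 1)) inferInstance ≤ noiseSigma εv η T :=
    le_iSup₂ (f := fun (i : ℕ ⊕ ℕ) (_ : i ∈ ({Sum.inl (T - 1)}ᶜ : Set (ℕ ⊕ ℕ))) =>
      MeasurableSpace.comap
        (Sum.rec (motive := fun i => Ω → Sum.elim (fun _ => Fin m → ℝ) (fun _ => Fin n → ℝ) i)
          (fun l => εv (l + 1)) (fun l => η (l + 1)) i)
        (Sum.rec (motive := fun i => MeasurableSpace (Sum.elim (fun _ => Fin m → ℝ) (fun _ => Fin n → ℝ) i))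
          (fun _ => (inferInstance : MeasurableSpace (Fin m → ℝ)))
          (fun _ => (inferInstance : MeasurableSpace (Fin n → ℝ))) i))
      (Sum.inr l) hmem
  exact Measurable.of_comap_le hle

lemma noiseSigma_indepFun (εv : ℕ → Ω → Fin m → ℝ) (η : ℕ → Ω → Fin n → ℝ)
    (hεmeas : ∀ l, Measurable (εv (l + 1))) (hηmeas : ∀ l, Measurable (η (l + 1)))
    (hindep : iIndepFun
      (β := fun i : ℕ ⊕ ℕ => Sum.elim (fun _ => Fin m → ℝ) (fun _ => Fin n → ℝ) i)
      (m := fun i => Sum.rec (fun _ => (inferInstance : MeasurableSpace (Fin m → ℝ)))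
        (fun _ => (inferInstance : MeasurableSpace (Fin n → ℝ))) i)
      (fun i => Sum.rec (fun l => εv (l + 1)) (fun l => η (l + 1)) i) ℙ)
    (T : ℕ) (hT : 1 ≤ T) {k : ℕ} (W : Ω → Fin k → ℝ)
    (hW : Measurable[noiseSigma εv η T] W) : IndepFun W (εv T) ℙ := by
  have h_le : ∀ i : ℕ ⊕ ℕ, MeasurableSpace.comap
      (Sum.rec (motive := fun i => Ω → Sum.elim (fun _ => Fin m → ℝ) (fun _ => Fin n → ℝ) i)
        (fun l => εv (l + 1)) (fun l => η (l + 1)) i)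
      (Sum.rec (motive := fun i => MeasurableSpace (Sum.elim (fun _ => Fin m → ℝ) (fun _ => Fin n → ℝ) i))
        (fun _ => (inferInstance : MeasurableSpace (Fin m → ℝ)))
        (fun _ => (inferInstance : MeasurableSpace (Fin n → ℝ))) i)
      ≤ (inferInstance : MeasurableSpace Ω) := by
    intro i
    cases i with
    | inl l => exact measurable_iff_comap_le.mp (hεmeas l)
    | inr l => exact measurable_iff_comap_le.mp (hηmeas l)
  have h1 := indep_iSup_of_disjoint h_le hindep
    (disjoint_compl_left (a := ({Sum.inl (T - 1)} : Set (ℕ ⊕ ℕ))))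
  have h2 : MeasurableSpace.comap (εv T) inferInstance
      ≤ ⨆ i ∈ ({Sum.inl (T - 1)} : Set (ℕ ⊕ ℕ)),
        MeasurableSpace.comap
          (Sum.rec (motive := fun i => Ω → Sum.elim (fun _ => Fin m → ℝ) (fun _ => Fin n → ℝ) i)
            (fun l => εv (l + 1)) (fun l => η (l + 1)) i)
          (Sum.rec (motive := fun i => MeasurableSpace (Sum.elim (fun _ => Fin m → ℝ) (fun _ => Fin n → ℝ) i))
            (fun _ => (inferInstance : MeasurableSpace (Fin m → ℝ)))
            (fun _ => (inferInstance : MeasurableSpace (Fin n → ℝ))) i) := by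
    have hTT : T - 1 + 1 = T := by omega
    have h4 := le_iSup₂ (f := fun (i : ℕ ⊕ ℕ) (_ : i ∈ ({Sum.inl (T - 1)} : Set (ℕ ⊕ ℕ))) =>
      MeasurableSpace.comap
        (Sum.rec (motive := fun i => Ω → Sum.elim (fun _ => Fin m → ℝ) (fun _ => Fin n → ℝ) i)
          (fun l => εv (l + 1)) (fun l => η (l + 1)) i)
        (Sum.rec (motive := fun i => MeasurableSpace (Sum.elim (fun _ => Fin m → ℝ) (fun _ => Fin n → ℝ) i))
          (fun _ => (inferInstance : MeasurableSpace (Fin m → ℝ)))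
          (fun _ => (inferInstance : MeasurableSpace (Fin n → ℝ))) i))
      (Sum.inl (T - 1)) rfl
    have h5 : MeasurableSpace.comap (εv (T - 1 + 1)) inferInstance
        ≤ ⨆ i ∈ ({Sum.inl (T - 1)} : Set (ℕ ⊕ ℕ)),
          MeasurableSpace.comap
            (Sum.rec (motive := fun i => Ω → Sum.elim (fun _ => Fin m → ℝ) (fun _ => Fin n → ℝ) i)
              (fun l => εv (l + 1)) (fun l => η (l + 1)) i)
            (Sum.rec (motive := fun i => MeasurableSpace (Sum.elim (fun _ => Fin m → ℝ) (fun _ => Fin n → ℝ) i))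
              (fun _ => (inferInstance : MeasurableSpace (Fin m → ℝ)))
              (fun _ => (inferInstance : MeasurableSpace (Fin n → ℝ))) i) := h4
    rw [hTT] at h5
    exact h5
  have h3 : Indep (noiseSigma εv η T) (MeasurableSpace.comap (εv T) inferInstance) ℙ :=
    indep_of_indep_of_le_right h1 h2
  exact indep_of_indep_of_le_left h3 (measurable_iff_comap_le.mp hW)

variable {Ω : Type*} [MeasureSpace Ω]

lemma iIndepFun_congr_ae {ι : Type*} [Countable ι] {β : ι → Type*}
    {mβ : ∀ i, MeasurableSpace (β i)} {f g : ∀ i, Ω → β i}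
    (hf : iIndepFun (m := mβ) f ℙ) (h : ∀ i, f i =ᵐ[ℙ] g i) : iIndepFun (m := mβ) g ℙ := by
  rw [iIndepFun_iff_measure_inter_preimage_eq_mul] at hf ⊢
  intro S sets hsets
  have hae : ∀ᵐ ω ∂(ℙ : Measure Ω), ∀ i, f i ω = g i ω := ae_all_iff.2 h
  have h1 : (ℙ : Measure Ω) (⋂ i ∈ S, g i ⁻¹' sets i) = ℙ (⋂ i ∈ S, f i ⁻¹' sets i) :=
    measure_congr (eventuallyEq_set.mpr (hae.mono fun ω hω => by
      simp only [Set.mem_iInter, Set.mem_preimage, hω]))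
  have h2 : ∀ i ∈ S, (ℙ : Measure Ω) (g i ⁻¹' sets i) = ℙ (f i ⁻¹' sets i) := fun i _ =>
    measure_congr (eventuallyEq_set.mpr ((h i).mono fun ω hω => by
      simp only [Set.mem_preimage, hω]))
  rw [h1, hf S hsets]
  exact (Finset.prod_congr rfl fun i hi => (h2 i hi)).symm


lemma measurable_pi_comp {Ω' : Type*} {mΩ' : MeasurableSpace Ω'} {k : ℕ} {f : Ω' → Fin k → ℝ}
    (hf : ∀ i, Measurable[mΩ'] fun ω => f ω i) : Measurable[mΩ'] f := by
  letI := mΩ'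
  exact measurable_pi_iff.mpr hf

lemma ordProd_self {n : ℕ} (Atil : ℕ → Matrix (Fin n) (Fin n) ℝ) (l : ℕ) :
    ordProd Atil l l = 1 := by simp [ordProd]

lemma ordProd_succ {n : ℕ} (Atil : ℕ → Matrix (Fin n) (Fin n) ℝ) (l d : ℕ) :
    ordProd Atil l (l + d + 1) = Atil (l + d + 1) * ordProd Atil l (l + d) := by
  have h1 : l + d + 1 - l = d + 1 := by omega
  have h2 : l + d - l = d := by omega
  rw [ordProd, ordProd, h1, h2, List.range_succ_eq_map, List.map_cons, List.prod_cons,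
    List.map_map]
  simp only [Nat.sub_zero]
  congr 2
  refine List.map_congr_left fun j _ => ?_
  have : l + d + 1 - (j + 1) = l + d - j := by omega
  simp only [Function.comp_apply, Nat.succ_eq_add_one, this]

lemma memLp_comp_proj {Ω : Type*} [MeasureSpace Ω] {k : ℕ} {X : Ω → Fin k → ℝ}
    (hX : MemLp X 2 ℙ) (i : Fin k) : MemLp (fun ω => X ω i) 2 ℙ :=
  (ContinuousLinearMap.proj (R := ℝ) (φ := fun _ : Fin k => ℝ) i).comp_memLp' hX
theorem core_cross_covariance {Ω : Type*} [MeasureSpace Ω]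
    [IsProbabilityMeasure (ℙ : Measure Ω)] {n m : ℕ} {t h : ℕ} (hht : h < t)
    (εv : ℕ → Ω → Fin m → ℝ) (η : ℕ → Ω → Fin n → ℝ)
    (hεmeas : ∀ l : ℕ, Measurable (εv (l + 1))) (hηmeas : ∀ l : ℕ, Measurable (η (l + 1)))
    (hεL2 : ∀ l : ℕ, 1 ≤ l → MemLp (εv l) 2 ℙ)
    (hηL2 : ∀ l : ℕ, 1 ≤ l → MemLp (η l) 2 ℙ)
    (hεcov : ∀ l : ℕ, 1 ≤ l → covMatrix (εv l) (εv l) = 1)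
    (hindep : iIndepFun
      (β := fun i : ℕ ⊕ ℕ => Sum.elim (fun _ => Fin m → ℝ) (fun _ => Fin n → ℝ) i)
      (m := fun i => Sum.rec (fun _ => (inferInstance : MeasurableSpace (Fin m → ℝ)))
        (fun _ => (inferInstance : MeasurableSpace (Fin n → ℝ))) i)
      (fun i => Sum.rec (fun l => εv (l + 1)) (fun l => η (l + 1)) i) ℙ)
    (A β : Matrix (Fin n) (Fin n) ℝ) (u : ℕ → Fin n → ℝ) (x₀ : Fin n → ℝ)
    (x : ℕ → Ω → Fin n → ℝ)
    (hx0 : ∀ ω, x 0 ω = x₀)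
    (hxrec : ∀ s : ℕ, ∀ ω, x (s + 1) ω = u (s + 1) + A *ᵥ x s ω + β *ᵥ η (s + 1) ω)
    (Atil : ℕ → Matrix (Fin n) (Fin n) ℝ) (Btil : ℕ → Matrix (Fin n) (Fin m) ℝ)
    (Ctil Ftil : ℕ → Matrix (Fin n) (Fin n) ℝ) (Gtil : ℕ → Fin n → ℝ)
    (e : ℕ → Ω → Fin n → ℝ)
    (he0 : ∀ ω, e 0 ω = 0)
    (herec : ∀ s : ℕ, ∀ ω, e (s + 1) ω =
      Atil (s + 1) *ᵥ e s ω - Btil (s + 1) *ᵥ εv (s + 1) ω - Ctil (s + 1) *ᵥ η (s + 1) ω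
        + Ftil (s + 1) *ᵥ x s ω + Gtil (s + 1)) :
    covMatrix (e t) (εv (t - h)) = -(ordProd Atil (t - h) t * Btil (t - h)) := by
  obtain ⟨T, hT1, rfl⟩ : ∃ T, 1 ≤ T ∧ T + h = t := ⟨t - h, by omega, by omega⟩
  have hTh : T + h - h = T := by omega
  rw [hTh]
  have hT0 : T - 1 + 1 = T := by omega
  -- componentwise L2 bounds
  have hL2ε : ∀ l i, MemLp (fun ω => εv (l + 1) ω i) 2 ℙ :=
    fun l i => memLp_comp_proj (hεL2 (l + 1) (by omega)) i
  have hL2η : ∀ l i, MemLp (fun ω => η (l + 1) ω i) 2 ℙ :=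
    fun l i => memLp_comp_proj (hηL2 (l + 1) (by omega)) i
  have hL2εT : ∀ i, MemLp (fun ω => εv T ω i) 2 ℙ := fun i => memLp_comp_proj (hεL2 T hT1) i
  have hL2x : ∀ s i, MemLp (fun ω => x s ω i) 2 ℙ := by
    intro s
    induction s with
    | zero =>
      intro i
      have hx : (fun ω => x 0 ω i) = fun _ => x₀ i := funext fun ω => by rw [hx0]
      rw [hx]; exact memLp_const _
    | succ s ih =>
      intro i
      have hx1 : (fun ω => x (s + 1) ω i)
          = fun ω => (u (s + 1) i + ∑ k, A i k * x s ω k) + ∑ k, β i k * η (s + 1) ω k := by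
        funext ω
        rw [hxrec s ω]
        simp [Matrix.mulVec, dotProduct, add_assoc]
      rw [hx1]
      exact ((memLp_const (u (s + 1) i)).add (memLp_finset_sum _ (fun k _ => (ih k).const_mul _))).add
        (memLp_finset_sum _ (fun k _ => (hL2η s k).const_mul _))
  have hL2e : ∀ s i, MemLp (fun ω => e s ω i) 2 ℙ := by
    intro s
    induction s with
    | zero =>
      intro i
      have hx : (fun ω => e 0 ω i) = fun _ => (0 : ℝ) := funext fun ω => by rw [he0]; rfl
      rw [hx]; exact memLp_const _
    | succ s ih =>
      intro i
      have hx1 : (fun ω => e (s + 1) ω i)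
          = fun ω => ((((∑ k, Atil (s + 1) i k * e s ω k) - ∑ k, Btil (s + 1) i k * εv (s + 1) ω k)
              - ∑ k, Ctil (s + 1) i k * η (s + 1) ω k) + ∑ k, Ftil (s + 1) i k * x s ω k)
              + Gtil (s + 1) i := by
        funext ω
        rw [herec s ω]
        simp [Matrix.mulVec, dotProduct]
      rw [hx1]
      exact (((((memLp_finset_sum _ (fun k _ => (ih k).const_mul _)).sub
        (memLp_finset_sum _ (fun k _ => (hL2ε s k).const_mul _))).sub
        (memLp_finset_sum _ (fun k _ => (hL2η s k).const_mul _))).add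
        (memLp_finset_sum _ (fun k _ => (hL2x s k).const_mul _))).add (memLp_const _))
  -- measurability with respect to the noise σ-algebra
  have hMη : ∀ l, 1 ≤ l → Measurable[noiseSigma εv η T] (η l) := by
    intro l hl
    have h2 := noiseSigma_meas_eta εv η T (l - 1)
    rwa [show l - 1 + 1 = l from by omega] at h2
  have hMε : ∀ l, 1 ≤ l → l ≠ T → Measurable[noiseSigma εv η T] (εv l) := by
    intro l hl hlT
    have h3 := noiseSigma_meas_eps εv η T (l - 1) hT1 (by omega)
    rwa [show l - 1 + 1 = l from by omega] at h3
  have hMx : ∀ s, Measurable[noiseSigma εv η T] (x s) := by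
    intro s
    induction s with
    | zero =>
      have hx : x 0 = fun _ => x₀ := funext hx0
      rw [hx]; exact measurable_const
    | succ s ih =>
      have hx1 : x (s + 1) = fun ω => u (s + 1) + A *ᵥ x s ω + β *ᵥ η (s + 1) ω :=
        funext (hxrec s)
      rw [hx1]
      refine measurable_pi_comp fun i => ?_
      simp only [Pi.add_apply, Matrix.mulVec, dotProduct]
      exact (measurable_const.add
        (Finset.measurable_sum _ fun k _ => ((measurable_pi_apply k).comp ih).const_mul _)).add
        (Finset.measurable_sum _ fun k _ =>
          ((measurable_pi_apply k).comp (noiseSigma_meas_eta εv η T s)).const_mul _)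
  have hMe : ∀ s, s < T → Measurable[noiseSigma εv η T] (e s) := by
    intro s
    induction s with
    | zero =>
      intro _
      have hx : e 0 = fun _ => (0 : Fin n → ℝ) := funext he0
      rw [hx]; exact measurable_const
    | succ s ih =>
      intro hsT
      have hx1 : e (s + 1) = fun ω =>
          Atil (s + 1) *ᵥ e s ω - Btil (s + 1) *ᵥ εv (s + 1) ω - Ctil (s + 1) *ᵥ η (s + 1) ω
            + Ftil (s + 1) *ᵥ x s ω + Gtil (s + 1) := funext (herec s)
      rw [hx1]
      have ihe := ih (by omega)
      have hεs := noiseSigma_meas_eps εv η T s hT1 (by omega)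
      refine measurable_pi_comp fun i => ?_
      simp only [Pi.add_apply, Pi.sub_apply, Matrix.mulVec, dotProduct]
      exact (((((Finset.measurable_sum _ fun k _ =>
        ((measurable_pi_apply k).comp ihe).const_mul _)).sub
        (Finset.measurable_sum _ fun k _ => ((measurable_pi_apply k).comp hεs).const_mul _)).sub
        (Finset.measurable_sum _ fun k _ =>
          ((measurable_pi_apply k).comp (noiseSigma_meas_eta εv η T s)).const_mul _)).add
        (Finset.measurable_sum _ fun k _ =>
          ((measurable_pi_apply k).comp (hMx s)).const_mul _)).add measurable_const
  -- vanishing covariances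
  have covZ : ∀ {k : ℕ} (W : Ω → Fin k → ℝ), Measurable[noiseSigma εv η T] W →
      (∀ i, MemLp (fun ω => W ω i) 2 ℙ) → covMatrix W (εv T) = 0 := by
    intro k W hWm hWL2
    exact covMatrix_zero_of_indep hWL2 hL2εT
      (noiseSigma_indepFun εv η hεmeas hηmeas hindep T hT1 W hWm)
  -- one-step expansion
  have hstep : ∀ s, covMatrix (e (s + 1)) (εv T)
      = Atil (s + 1) * covMatrix (e s) (εv T) - Btil (s + 1) * covMatrix (εv (s + 1)) (εv T)
        - Ctil (s + 1) * covMatrix (η (s + 1)) (εv T)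
        + Ftil (s + 1) * covMatrix (x s) (εv T) := by
    intro s
    have he1 : e (s + 1) = fun ω =>
        Atil (s + 1) *ᵥ e s ω - Btil (s + 1) *ᵥ εv (s + 1) ω - Ctil (s + 1) *ᵥ η (s + 1) ω
          + Ftil (s + 1) *ᵥ x s ω + Gtil (s + 1) := funext (herec s)
    rw [he1]
    exact covMatrix_step _ _ _ _ _ _ _ _ _ _ (hL2e s) (hL2ε s) (hL2η s) (hL2x s) hL2εT
  -- the main induction
  have claim : ∀ d, covMatrix (e (T + d)) (εv T) = -(ordProd Atil T (T + d) * Btil T) := by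
    intro d
    induction d with
    | zero =>
      have h0 : T + 0 = T - 1 + 1 := by omega
      rw [h0, hstep (T - 1), hT0, ordProd_self,
        covZ (e (T - 1)) (hMe (T - 1) (by omega)) (hL2e (T - 1)),
        hεcov T hT1,
        covZ (η T) (hMη T hT1) (fun i => by
          have h5 := hL2η (T - 1) i
          rwa [hT0] at h5),
        covZ (x (T - 1)) (hMx (T - 1)) (hL2x (T - 1))]
      simp [Matrix.mul_zero, Matrix.mul_one, Matrix.one_mul]
    | succ d ih =>
      have h1 : T + (d + 1) = (T + d) + 1 := by omega
      rw [h1, hstep (T + d), ih,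
        covZ (εv (T + d + 1)) (hMε (T + d + 1) (by omega) (by omega)) (hL2ε (T + d)),
        covZ (η (T + d + 1)) (hMη (T + d + 1) (by omega)) (hL2η (T + d)),
        covZ (x (T + d)) (hMx (T + d)) (hL2x (T + d)),
        ordProd_succ]
      simp only [Matrix.mul_zero, sub_zero, add_zero, Matrix.mul_neg, Matrix.mul_assoc]
  exact claim h

lemma covMatrix_congr_ae {Ω : Type*} [MeasureSpace Ω] {a b : ℕ}
    {X X' : Ω → Fin a → ℝ} {Y Y' : Ω → Fin b → ℝ}
    (hX : X =ᵐ[ℙ] X') (hY : Y =ᵐ[ℙ] Y') : covMatrix X Y = covMatrix X' Y' := by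
  ext i j
  have hXi : (fun ω => X ω i) =ᵐ[ℙ] fun ω => X' ω i := hX.mono fun ω hω => by show X ω i = X' ω i; rw [hω]
  have hYj : (fun ω => Y ω j) =ᵐ[ℙ] fun ω => Y' ω j := hY.mono fun ω hω => by show Y ω j = Y' ω j; rw [hω]
  have h1 : (∫ ω', X ω' i) = ∫ ω', X' ω' i := integral_congr_ae hXi
  have h2 : (∫ ω', Y ω' j) = ∫ ω', Y' ω' j := integral_congr_ae hYj
  simp only [covMatrix, Matrix.of_apply]
  rw [h1, h2]
  exact integral_congr_ae (by filter_upwards [hXi, hYj] with ω hu hv; rw [hu, hv])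

end Aux

/-- cross-covariance of the filter error with the observation noise. -/
theorem filter_error_obs_noise_cross_covariance {Ω : Type*} [MeasureSpace Ω]
    [IsProbabilityMeasure (ℙ : Measure Ω)] {n m : ℕ} {t h : ℕ} (hht : h < t)
    (εv : ℕ → Ω → Fin m → ℝ) (η : ℕ → Ω → Fin n → ℝ)
    (hεL2 : ∀ l : ℕ, 1 ≤ l → MemLp (εv l) 2 ℙ)
    (hηL2 : ∀ l : ℕ, 1 ≤ l → MemLp (η l) 2 ℙ)
    (hεmean : ∀ l : ℕ, 1 ≤ l → ∀ i, (∫ ω, εv l ω i) = 0)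
    (hηmean : ∀ l : ℕ, 1 ≤ l → ∀ i, (∫ ω, η l ω i) = 0)
    (hεcov : ∀ l : ℕ, 1 ≤ l → covMatrix (εv l) (εv l) = 1)
    (hηcov : ∀ l : ℕ, 1 ≤ l → covMatrix (η l) (η l) = 1)
    -- ε₁, ε₂, …, η₁, η₂, … are mutually independent
    (hindep : iIndepFun
      (β := fun i : ℕ ⊕ ℕ => Sum.elim (fun _ => Fin m → ℝ) (fun _ => Fin n → ℝ) i)
      (m := fun i => Sum.rec (fun _ => (inferInstance : MeasurableSpace (Fin m → ℝ)))
        (fun _ => (inferInstance : MeasurableSpace (Fin n → ℝ))) i)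
      (fun i => Sum.rec (fun l => εv (l + 1)) (fun l => η (l + 1)) i) ℙ)
    -- state recursion, deterministic x₀
    (A β : Matrix (Fin n) (Fin n) ℝ) (u : ℕ → Fin n → ℝ) (x₀ : Fin n → ℝ)
    (x : ℕ → Ω → Fin n → ℝ)
    (hx0 : ∀ ω, x 0 ω = x₀)
    (hxrec : ∀ s : ℕ, ∀ ω, x (s + 1) ω = u (s + 1) + A *ᵥ x s ω + β *ᵥ η (s + 1) ω)
    -- filter error recursion with deterministic coefficients
    (Atil : ℕ → Matrix (Fin n) (Fin n) ℝ) (Btil : ℕ → Matrix (Fin n) (Fin m) ℝ)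
    (Ctil Ftil : ℕ → Matrix (Fin n) (Fin n) ℝ) (Gtil : ℕ → Fin n → ℝ)
    (e : ℕ → Ω → Fin n → ℝ)
    (he0 : ∀ ω, e 0 ω = 0)
    (herec : ∀ s : ℕ, ∀ ω, e (s + 1) ω =
      Atil (s + 1) *ᵥ e s ω - Btil (s + 1) *ᵥ εv (s + 1) ω - Ctil (s + 1) *ᵥ η (s + 1) ω
        + Ftil (s + 1) *ᵥ x s ω + Gtil (s + 1))
    :
    covMatrix (e t) (εv (t - h)) = -(ordProd Atil (t - h) t * Btil (t - h)) := by
  classical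
  -- measurable modifications of the noises
  obtain ⟨ε', hε'me, hε'ae⟩ : ∃ ε' : ℕ → Ω → Fin m → ℝ,
      (∀ l, Measurable (ε' (l + 1))) ∧ (∀ l, 1 ≤ l → εv l =ᵐ[ℙ] ε' l) := by
    refine ⟨fun l => if hl : 1 ≤ l then (hεL2 l hl).aestronglyMeasurable.mk (εv l) else εv l,
      fun l => ?_, fun l hl => ?_⟩
    · simp only [dif_pos (by omega : 1 ≤ l + 1)]
      exact ((hεL2 (l + 1) (by omega)).aestronglyMeasurable.stronglyMeasurable_mk).measurable
    · simp only [dif_pos hl]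
      exact (hεL2 l hl).aestronglyMeasurable.ae_eq_mk
  obtain ⟨η', hη'me, hη'ae⟩ : ∃ η' : ℕ → Ω → Fin n → ℝ,
      (∀ l, Measurable (η' (l + 1))) ∧ (∀ l, 1 ≤ l → η l =ᵐ[ℙ] η' l) := by
    refine ⟨fun l => if hl : 1 ≤ l then (hηL2 l hl).aestronglyMeasurable.mk (η l) else η l,
      fun l => ?_, fun l hl => ?_⟩
    · simp only [dif_pos (by omega : 1 ≤ l + 1)]
      exact ((hηL2 (l + 1) (by omega)).aestronglyMeasurable.stronglyMeasurable_mk).measurable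
    · simp only [dif_pos hl]
      exact (hηL2 l hl).aestronglyMeasurable.ae_eq_mk
  -- modified state and error processes
  obtain ⟨x', hx'0, hx'rec⟩ : ∃ x' : ℕ → Ω → Fin n → ℝ, (∀ ω, x' 0 ω = x₀) ∧
      ∀ s ω, x' (s + 1) ω = u (s + 1) + A *ᵥ x' s ω + β *ᵥ η' (s + 1) ω :=
    ⟨fun s => Nat.rec (fun _ => x₀)
      (fun s xs ω => u (s + 1) + A *ᵥ xs ω + β *ᵥ η' (s + 1) ω) s,
      fun _ => rfl, fun _ _ => rfl⟩
  obtain ⟨e', he'0, he'rec⟩ : ∃ e' : ℕ → Ω → Fin n → ℝ, (∀ ω, e' 0 ω = 0) ∧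
      ∀ s ω, e' (s + 1) ω = Atil (s + 1) *ᵥ e' s ω - Btil (s + 1) *ᵥ ε' (s + 1) ω
        - Ctil (s + 1) *ᵥ η' (s + 1) ω + Ftil (s + 1) *ᵥ x' s ω + Gtil (s + 1) :=
    ⟨fun s => Nat.rec (fun _ => 0)
      (fun s es ω => Atil (s + 1) *ᵥ es ω - Btil (s + 1) *ᵥ ε' (s + 1) ω
        - Ctil (s + 1) *ᵥ η' (s + 1) ω + Ftil (s + 1) *ᵥ x' s ω + Gtil (s + 1)) s,
      fun _ => rfl, fun _ _ => rfl⟩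
  have hxae : ∀ s, x s =ᵐ[ℙ] x' s := by
    intro s
    induction s with
    | zero => exact Filter.Eventually.of_forall fun ω => by rw [hx0, hx'0]
    | succ s ih =>
      filter_upwards [ih, hη'ae (s + 1) (by omega)] with ω h1 h2
      rw [hxrec s ω, hx'rec s ω, h1, h2]
  have heae : ∀ s, e s =ᵐ[ℙ] e' s := by
    intro s
    induction s with
    | zero => exact Filter.Eventually.of_forall fun ω => by rw [he0, he'0]
    | succ s ih =>
      filter_upwards [ih, hε'ae (s + 1) (by omega), hη'ae (s + 1) (by omega), hxae s]
        with ω h1 h2 h3 h4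
      rw [herec s ω, he'rec s ω, h1, h2, h3, h4]
  -- transferred hypotheses
  have hεL2' : ∀ l, 1 ≤ l → MemLp (ε' l) 2 ℙ := fun l hl => (hεL2 l hl).ae_eq (hε'ae l hl)
  have hηL2' : ∀ l, 1 ≤ l → MemLp (η' l) 2 ℙ := fun l hl => (hηL2 l hl).ae_eq (hη'ae l hl)
  have hεcov' : ∀ l, 1 ≤ l → covMatrix (ε' l) (ε' l) = 1 := fun l hl => by
    rw [← covMatrix_congr_ae (hε'ae l hl) (hε'ae l hl)]; exact hεcov l hl
  have hindep' : iIndepFun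
      (β := fun i : ℕ ⊕ ℕ => Sum.elim (fun _ => Fin m → ℝ) (fun _ => Fin n → ℝ) i)
      (m := fun i => Sum.rec (fun _ => (inferInstance : MeasurableSpace (Fin m → ℝ)))
        (fun _ => (inferInstance : MeasurableSpace (Fin n → ℝ))) i)
      (fun i => Sum.rec (fun l => ε' (l + 1)) (fun l => η' (l + 1)) i) ℙ := by
    refine iIndepFun_congr_ae hindep fun i => ?_
    cases i with
    | inl l => exact hε'ae (l + 1) (by omega)
    | inr l => exact hη'ae (l + 1) (by omega)
  rw [covMatrix_congr_ae (heae t) (hε'ae (t - h) (by omega))]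
  exact core_cross_covariance hht ε' η' hε'me hη'me hεL2' hηL2' hεcov' hindep'
    A β u x₀ x' hx'0 hx'rec Atil Btil Ctil Ftil Gtil e' he'0 he'rec
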